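/- Let $F$ be a reduced (squarefree) homogeneous polynomial in three variables defining a curve $C = V(F) \subset \mathbb{P}^2$ of degree $d$, with irreducible components $C_1, \ldots, C_h$ of degrees $d_i$ and geometric genera $g_i$, and assume the polar map of $F$ is birational. If at each singular point $x$ the local base-locus multiplicity $\tilde\mu_x$ of the polar system satisfies $\tilde\mu_x \leq 2\delta_x - r_x + 1$ and $\sum_x \tilde\mu_x = d^2 - 2d$, then $\sum_{i=1}^h (2 - d_i) \geq 2\sum_{i=1}^h g_i + \sum_{x \in \mathrm{Sing}(C)} (r_x - 1) \geq 0$. -/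

import Mathlib

/-- let `C` be a reduced plane curve of degree `d` with `h`
irreducible components of degrees `dᵢ` (so `∑ dᵢ = d`) and geometric genera
`gᵢ`, with singular points `S` carrying delta invariants `δₓ`, branch numbers
`rₓ ≥ 1` and local base-locus multiplicities `μ̃ₓ` of the polar system. Given
the genus formula `(d-1)(d-2)/2 = ∑ gᵢ + ∑ δₓ - h + 1`, the Jung–Milnor bound
`μ̃ₓ ≤ 2δₓ - rₓ + 1`, and the homaloidal degree count `∑ μ̃ₓ = d² - 2d`, we
get `∑ (2 - dᵢ) ≥ 2 ∑ gᵢ + ∑ (rₓ - 1) ≥ 0`. -/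
theorem homaloidal_component_inequality {X : Type*} (d h : ℕ)
    (dd g : Fin h → ℕ) (hdeg : ∀ i, 1 ≤ dd i) (hsum : ∑ i, dd i = d)
    (S : Finset X) (δ r μ : X → ℕ) (hr : ∀ x ∈ S, 1 ≤ r x)
    -- genus formula (Lemma 4)
    (hgenus : ((d : ℤ) - 1) * ((d : ℤ) - 2) / 2 =
        ∑ i, (g i : ℤ) + ∑ x ∈ S, (δ x : ℤ) - h + 1)
    -- Jung–Milnor bound on the local multiplicities of the polar base scheme
    (hmu : ∀ x ∈ S, (μ x : ℤ) ≤ 2 * (δ x : ℤ) - (r x : ℤ) + 1)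
    -- the polar map is birational, so the base scheme has total length `d² - 2d`
    (hsummu : ∑ x ∈ S, (μ x : ℤ) = (d : ℤ) ^ 2 - 2 * d) :
    (∑ i, (2 - (dd i : ℤ))) ≥ 2 * ∑ i, (g i : ℤ) + ∑ x ∈ S, ((r x : ℤ) - 1) ∧
      2 * ∑ i, (g i : ℤ) + ∑ x ∈ S, ((r x : ℤ) - 1) ≥ 0 := by
  have heven : Even (((d : ℤ) - 1) * ((d : ℤ) - 2)) := by
    have := Int.even_mul_succ_self ((d : ℤ) - 2)
    have e : ((d : ℤ) - 2) * (((d : ℤ) - 2) + 1) = ((d : ℤ) - 1) * ((d : ℤ) - 2) := by ring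
    rwa [e] at this
  have h2 : 2 * (((d : ℤ) - 1) * ((d : ℤ) - 2) / 2) = ((d : ℤ) - 1) * ((d : ℤ) - 2) :=
    Int.two_mul_ediv_two_of_even heven
  have hdelta : 2 * ∑ x ∈ S, (δ x : ℤ) =
      ((d : ℤ) - 1) * ((d : ℤ) - 2) - 2 * ∑ i, (g i : ℤ) + 2 * h - 2 := by
    have := congrArg (fun t => 2 * t) hgenus
    rw [h2] at this
    linarith
  have hmusum : ∑ x ∈ S, (μ x : ℤ) ≤
      2 * ∑ x ∈ S, (δ x : ℤ) - ∑ x ∈ S, ((r x : ℤ) - 1) := by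
    have := Finset.sum_le_sum hmu
    have e1 : ∑ x ∈ S, (2 * (δ x : ℤ) - (r x : ℤ) + 1) =
        2 * ∑ x ∈ S, (δ x : ℤ) - ∑ x ∈ S, ((r x : ℤ) - 1) := by
      rw [Finset.mul_sum, ← Finset.sum_sub_distrib]
      apply Finset.sum_congr rfl
      intro x _
      ring
    linarith
  have hdd : ∑ i, (2 - (dd i : ℤ)) = 2 * h - d := by
    rw [Finset.sum_sub_distrib, Finset.sum_const, Finset.card_univ, Fintype.card_fin]
    have : ∑ i, ((dd i : ℤ)) = (d : ℤ) := by
      rw [← Nat.cast_sum, hsum]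
    rw [this]
    push_cast
    ring
  have hg0 : (0 : ℤ) ≤ ∑ i, (g i : ℤ) :=
    Finset.sum_nonneg fun i _ => Int.natCast_nonneg _
  have hr0 : (0 : ℤ) ≤ ∑ x ∈ S, ((r x : ℤ) - 1) :=
    Finset.sum_nonneg fun x hx => by
      have := hr x hx
      have : (1 : ℤ) ≤ (r x : ℤ) := by exact_mod_cast this
      linarith
  constructor
  · rw [hdd]
    nlinarith [hsummu, hmusum, hdelta]
  · linarith
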